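/- (Dynamic indexing extracts the indexed value) Let Z ∈ ℝ^n with m_j ≤ Z_j ≤ M_j for all j, let t ∈ {1,…,n}, and let Δ ∈ {0,1}^n, Ẑ ∈ ℝ^n satisfy: Σ_j Δ_j = 1, Σ_j j·Δ_j = t, and for every j: Ẑ_j ≥ m_j Δ_j, Ẑ_j ≤ M_j Δ_j, Ẑ_j ≤ Z_j − m_j(1 − Δ_j), Ẑ_j ≥ Z_j − M_j(1 − Δ_j). Then Σ_j Ẑ_j = Z_t. -/

import Mathlib

theorem dynamic_indexing_extracts
    (n : ℕ) (Z Zhat Δ m M : ℕ → ℝ)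
    (hbnd : ∀ j ∈ Finset.Icc 1 n, m j ≤ Z j ∧ Z j ≤ M j)
    (t : ℕ) (ht : 1 ≤ t ∧ t ≤ n)
    (hbin : ∀ j, Δ j = 0 ∨ Δ j = 1)
    (hsum : ∑ j ∈ Finset.Icc 1 n, Δ j = 1)
    (hidx : ∑ j ∈ Finset.Icc 1 n, (j : ℝ) * Δ j = (t : ℝ))
    (h1 : ∀ j ∈ Finset.Icc 1 n, Zhat j ≥ m j * Δ j)
    (h2 : ∀ j ∈ Finset.Icc 1 n, Zhat j ≤ M j * Δ j)
    (h3 : ∀ j ∈ Finset.Icc 1 n, Zhat j ≤ Z j - m j * (1 - Δ j))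
    (h4 : ∀ j ∈ Finset.Icc 1 n, Zhat j ≥ Z j - M j * (1 - Δ j)) :
    ∑ j ∈ Finset.Icc 1 n, Zhat j = Z t := by
  set I := Finset.Icc 1 n with hI
  set S := I.filter (fun j => Δ j = 1) with hS
  have hSsum : ∑ j ∈ I, Δ j = (S.card : ℝ) := by
    rw [← Finset.sum_filter_add_sum_filter_not I (fun j => Δ j = 1)]
    have h0 : ∑ j ∈ I.filter (fun j => ¬ Δ j = 1), Δ j = 0 := by
      apply Finset.sum_eq_zero
      intro j hj
      rcases hbin j with h | h
      · exact h
      · exact absurd h (Finset.mem_filter.mp hj).2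
    rw [h0, add_zero]
    rw [Finset.sum_congr rfl (fun j hj => (Finset.mem_filter.mp hj).2)]
    simp
    convert rfl
  have hcard : S.card = 1 := by
    have := hSsum.symm.trans hsum
    exact_mod_cast this
  obtain ⟨j0, hj0⟩ := Finset.card_eq_one.mp hcard
  have hj0I : j0 ∈ I := by
    have : j0 ∈ S := by rw [hj0]; exact Finset.mem_singleton_self j0
    exact (Finset.mem_filter.mp this).1
  have hj0Δ : Δ j0 = 1 := by
    have : j0 ∈ S := by rw [hj0]; exact Finset.mem_singleton_self j0
    exact (Finset.mem_filter.mp this).2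
  have hzero : ∀ j ∈ I, j ≠ j0 → Δ j = 0 := by
    intro j hj hne
    rcases hbin j with h | h
    · exact h
    · exact absurd (hj0 ▸ Finset.mem_filter.mpr ⟨hj, h⟩ : j ∈ ({j0} : Finset ℕ))
        (by simpa using hne)
  have hj0t : j0 = t := by
    have : ∑ j ∈ I, (j : ℝ) * Δ j = (j0 : ℝ) := by
      rw [Finset.sum_eq_single_of_mem j0 hj0I]
      · rw [hj0Δ]; ring
      · intro j hj hne
        rw [hzero j hj hne]; ring
    have h2 : (j0 : ℝ) = (t : ℝ) := this.symm.trans hidx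
    exact_mod_cast h2
  subst hj0t
  have hZhat0 : ∀ j ∈ I, j ≠ j0 → Zhat j = 0 := by
    intro j hj hne
    have ha := h1 j hj
    have hb := h2 j hj
    rw [hzero j hj hne] at ha hb
    simp at ha hb
    linarith
  have hZhatt : Zhat j0 = Z j0 := by
    have ha := h3 j0 hj0I
    have hb := h4 j0 hj0I
    rw [hj0Δ] at ha hb
    simp at ha hb
    linarith
  rw [Finset.sum_eq_single_of_mem j0 hj0I hZhat0, hZhatt]
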